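/- The PRIM sampling scheme is correct: if the profile S is sampled with probability proportional to exp(-β f(S)) Z(S), and then, conditioned on S, a top-k list τ ∈ T(S) is generated with probability [1 / ((n-k choose k-ℓ)(k-ℓ)!)] · exp(-β Σ_{j∈S} w_j I_j(τ)) / ∏_{j=1}^{ℓ} Σ_{r=0}^{k-j} e^{-β w_{s_j} r}, then the overall probability of producing τ equals exp(-β K^{p,w}(τ,τ*)) / M, where M = Σ_{τ'} exp(-β K^{p,w}(τ',τ*)) is the normalizing constant of the generalized top-k Mallows model. -/

import Mathlib

open Finset

/-- `i` is ranked by the top-`k` list `τ` (an injection `Fin k ↪ Fin n`). -/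
def ranked {n k : ℕ} (τ : Fin k ↪ Fin n) (i : Fin n) : Prop := ∃ a, τ a = i

instance {n k : ℕ} (τ : Fin k ↪ Fin n) (i : Fin n) : Decidable (ranked τ i) :=
  inferInstanceAs (Decidable (∃ a, τ a = i))

/-- `i ≻_τ j`: `i` is ranked by `τ` and either `j` is unranked or `i` precedes `j`. -/
def above {n k : ℕ} (τ : Fin k ↪ Fin n) (i j : Fin n) : Prop :=
  ranked τ i ∧ ∀ b, τ b = j → ∃ a, a < b ∧ τ a = i

instance {n k : ℕ} (τ : Fin k ↪ Fin n) (i j : Fin n) : Decidable (above τ i j) := by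
  unfold above; infer_instance

/-- The inversion count `I_i(τ) = |{t > i : t ≻_τ i}|`. -/
def InvI {n k : ℕ} (τ : Fin k ↪ Fin n) (i : Fin n) : ℕ :=
  (Finset.univ.filter fun t : Fin n => i < t ∧ above τ t i).card

/-- `P_i(τ) = |{t > i : t and i both unranked by τ}|`. -/
def Pinv {n k : ℕ} (τ : Fin k ↪ Fin n) (i : Fin n) : ℕ :=
  (Finset.univ.filter fun t : Fin n => i < t ∧ ¬ ranked τ t ∧ ¬ ranked τ i).card

/-- The center `τ* = (1,…,k)` as a finset: elements of value `< k`. -/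
def centerF (n k : ℕ) : Finset (Fin n) := Finset.univ.filter fun i => (i : ℕ) < k

/-- The profile `τ ∩ τ*` of a top-`k` list. -/
def profileF {n k : ℕ} (τ : Fin k ↪ Fin n) : Finset (Fin n) :=
  Finset.univ.filter fun i => (i : ℕ) < k ∧ ranked τ i

/-- `Q(τ) = (k - |τ ∩ τ*| choose 2)`. -/
def Qinv {n k : ℕ} (τ : Fin k ↪ Fin n) : ℕ := (k - (profileF τ).card).choose 2

/-- The generalized top-`k` Mallows distance
`K^{p,w}(τ,τ*) = w₀ p Q(τ) + Σ_{i ∈ [k]} w_i (I_i(τ) + p P_i(τ))`. -/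
noncomputable def Kdist {n k : ℕ} (p w0 : ℝ) (w : Fin n → ℝ) (τ : Fin k ↪ Fin n) : ℝ :=
  w0 * p * (Qinv τ : ℕ) +
    ∑ i ∈ centerF n k, w i * ((InvI τ i : ℝ) + p * (Pinv τ i : ℝ))

/-- `f(S) = w₀ p Q(S) + Σ_{j ∈ [k]\S} w_j (I_j(S) + p P_j(S))`, depending only on the profile. -/
noncomputable def fS (n k : ℕ) (p w0 : ℝ) (w : Fin n → ℝ) (S : Finset (Fin n)) : ℝ :=
  w0 * p * ((k - S.card).choose 2 : ℕ) +
    ∑ j ∈ centerF n k \ S,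
      w j * ((((S.filter fun t => j < t).card + (k - S.card) : ℕ) : ℝ)
        + p * ((((centerF n k \ S).filter fun t => j < t).card + (n - k - (k - S.card)) : ℕ) : ℝ))

/-- `Z(S) = (n-k choose k-ℓ) (k-ℓ)! ∏_{j=1}^{ℓ} Σ_{r=0}^{k-j} e^{-β w_{s_j} r}`,
where `s_1 < s_2 < ⋯ < s_ℓ` are the elements of `S`. -/
noncomputable def ZS (n k : ℕ) (β : ℝ) (w : Fin n → ℝ) (S : Finset (Fin n)) : ℝ :=
  (((n - k).choose (k - S.card) * (k - S.card).factorial : ℕ) : ℝ) *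
    ∏ j : Fin S.card, ∑ r ∈ Finset.range (k - (j : ℕ)),
      Real.exp (-β * w ((S.orderIsoOfFin rfl j : S) : Fin n) * r)

section Basic
open Finset
variable {n k : ℕ}

lemma filter_ranked_eq (τ : Fin k ↪ Fin n) :
    (univ.filter fun t => ranked τ t) = univ.image τ := by
  ext t; simp [ranked, eq_comm]

lemma card_ranked (τ : Fin k ↪ Fin n) :
    (univ.filter fun t => ranked τ t).card = k := by
  rw [filter_ranked_eq, Finset.card_image_of_injective _ τ.injective, card_univ,
    Fintype.card_fin]

lemma card_big_ranked (τ : Fin k ↪ Fin n) :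
    (univ.filter fun t : Fin n => ranked τ t ∧ ¬ ((t : ℕ) < k)).card
      = k - (profileF τ).card := by
  have h := Finset.card_filter_add_card_filter_not (s := univ.filter fun t => ranked τ t)
    (p := fun t : Fin n => (t : ℕ) < k)
  rw [Finset.filter_filter, Finset.filter_filter] at h
  have h1 : (univ.filter fun t : Fin n => ranked τ t ∧ (t : ℕ) < k) = profileF τ := by
    ext t; simp [profileF, and_comm]
  rw [h1, card_ranked] at h
  omega

end Basic

section LemA
open Finset
variable {n k : ℕ}

lemma centerF_card (hk : k ≤ n) : (centerF n k).card = k := by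
  have : centerF n k = univ.image (Fin.castLE hk) := by
    ext t
    simp only [centerF, mem_filter, mem_univ, true_and, mem_image]
    constructor
    · intro h; exact ⟨⟨t, h⟩, by ext; simp⟩
    · rintro ⟨i, rfl⟩; simpa using i.2
  rw [this, Finset.card_image_of_injective _ (Fin.castLE_injective hk), card_univ,
    Fintype.card_fin]

lemma card_noncenter (hk : k ≤ n) :
    (univ.filter fun t : Fin n => ¬ ((t : ℕ) < k)).card = n - k := by
  have h := Finset.card_filter_add_card_filter_not (s := (univ : Finset (Fin n)))
    (p := fun t : Fin n => (t : ℕ) < k)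
  have h1 : (univ.filter fun t : Fin n => (t : ℕ) < k).card = k := centerF_card hk
  rw [card_univ, Fintype.card_fin] at h
  omega

lemma invI_unranked (τ : Fin k ↪ Fin n) {i : Fin n} (hi : ¬ ranked τ i)
    (hik : (i : ℕ) < k) :
    InvI τ i = ((profileF τ).filter fun t => i < t).card + (k - (profileF τ).card) := by
  have habove : ∀ t, above τ t i ↔ ranked τ t := fun t =>
    ⟨fun h => h.1, fun h => ⟨h, fun b hb => absurd ⟨b, hb⟩ hi⟩⟩
  have h0 : InvI τ i = (univ.filter fun t : Fin n => i < t ∧ ranked τ t).card := by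
    unfold InvI; congr 1; ext t; simp [habove]
  have h := Finset.card_filter_add_card_filter_not
    (s := univ.filter fun t : Fin n => i < t ∧ ranked τ t) (p := fun t : Fin n => (t : ℕ) < k)
  rw [Finset.filter_filter, Finset.filter_filter] at h
  have h1 : (univ.filter fun t : Fin n => (i < t ∧ ranked τ t) ∧ (t : ℕ) < k)
      = (profileF τ).filter fun t => i < t := by
    ext t; simp only [mem_filter, mem_univ, true_and, profileF]; tauto
  have h2 : (univ.filter fun t : Fin n => (i < t ∧ ranked τ t) ∧ ¬ (t : ℕ) < k)
      = univ.filter fun t : Fin n => ranked τ t ∧ ¬ (t : ℕ) < k := by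
    ext t; simp only [mem_filter, mem_univ, true_and]
    constructor
    · tauto
    · rintro ⟨h3, h4⟩; exact ⟨⟨by rw [Fin.lt_def]; omega, h3⟩, h4⟩
  rw [h1, h2, card_big_ranked] at h
  omega

lemma pinv_unranked (τ : Fin k ↪ Fin n) (hk : k ≤ n) {i : Fin n} (hi : ¬ ranked τ i)
    (hik : (i : ℕ) < k) :
    Pinv τ i = ((centerF n k \ profileF τ).filter fun t => i < t).card
      + (n - k - (k - (profileF τ).card)) := by
  have h0 : Pinv τ i = (univ.filter fun t : Fin n => i < t ∧ ¬ ranked τ t).card := by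
    unfold Pinv; congr 1; ext t; simp only [mem_filter, mem_univ, true_and]; tauto
  have h := Finset.card_filter_add_card_filter_not
    (s := univ.filter fun t : Fin n => i < t ∧ ¬ ranked τ t) (p := fun t : Fin n => (t : ℕ) < k)
  rw [Finset.filter_filter, Finset.filter_filter] at h
  have h1 : (univ.filter fun t : Fin n => (i < t ∧ ¬ ranked τ t) ∧ (t : ℕ) < k)
      = (centerF n k \ profileF τ).filter fun t => i < t := by
    ext t
    simp only [mem_filter, mem_univ, true_and, mem_sdiff, centerF, profileF]
    tauto
  have h2 : (univ.filter fun t : Fin n => (i < t ∧ ¬ ranked τ t) ∧ ¬ (t : ℕ) < k)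
      = univ.filter fun t : Fin n => ¬ ranked τ t ∧ ¬ (t : ℕ) < k := by
    ext t; simp only [mem_filter, mem_univ, true_and]
    constructor
    · tauto
    · rintro ⟨h3, h4⟩; exact ⟨⟨by rw [Fin.lt_def]; omega, h3⟩, h4⟩
  have h3 : (univ.filter fun t : Fin n => ¬ ranked τ t ∧ ¬ (t : ℕ) < k).card
      = n - k - (k - (profileF τ).card) := by
    have ha := Finset.card_filter_add_card_filter_not
      (s := univ.filter fun t : Fin n => ¬ ((t : ℕ) < k)) (p := fun t : Fin n => ranked τ t)
    rw [Finset.filter_filter, Finset.filter_filter] at ha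
    have hb : (univ.filter fun t : Fin n => ¬ (t : ℕ) < k ∧ ranked τ t)
        = univ.filter fun t : Fin n => ranked τ t ∧ ¬ (t : ℕ) < k := by
      ext t; simp only [mem_filter, mem_univ, true_and]; tauto
    have hc : (univ.filter fun t : Fin n => ¬ (t : ℕ) < k ∧ ¬ ranked τ t)
        = univ.filter fun t : Fin n => ¬ ranked τ t ∧ ¬ (t : ℕ) < k := by
      ext t; simp only [mem_filter, mem_univ, true_and]; tauto
    rw [hb, hc, card_big_ranked, card_noncenter hk] at ha
    omega
  rw [h1, h2, h3] at h
  omega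

lemma pinv_ranked (τ : Fin k ↪ Fin n) {i : Fin n} (hi : ranked τ i) : Pinv τ i = 0 := by
  unfold Pinv
  rw [Finset.card_eq_zero, Finset.filter_eq_empty_iff]
  intro t _; tauto

lemma profile_subset (τ : Fin k ↪ Fin n) : profileF τ ⊆ centerF n k := by
  intro t ht
  simp only [profileF, mem_filter] at ht
  simp [centerF, ht.2.1]

lemma kdist_eq (p w0 : ℝ) (w : Fin n → ℝ) (τ : Fin k ↪ Fin n) (hk : k ≤ n) :
    Kdist p w0 w τ = fS n k p w0 w (profileF τ)
      + ∑ j ∈ profileF τ, w j * (InvI τ j : ℝ) := by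
  unfold Kdist fS
  rw [← Finset.sum_sdiff (profile_subset τ)]
  have h1 : ∀ j ∈ centerF n k \ profileF τ,
      w j * ((InvI τ j : ℝ) + p * (Pinv τ j : ℝ))
        = w j * (((((profileF τ).filter fun t => j < t).card + (k - (profileF τ).card) : ℕ) : ℝ)
          + p * ((((centerF n k \ profileF τ).filter fun t => j < t).card
              + (n - k - (k - (profileF τ).card)) : ℕ) : ℝ)) := by
    intro j hj
    simp only [mem_sdiff, centerF, profileF, mem_filter, mem_univ, true_and] at hj
    have hunr : ¬ ranked τ j := fun hr => hj.2 ⟨hj.1, hr⟩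
    rw [invI_unranked τ hunr hj.1, pinv_unranked τ hk hunr hj.1]
  have h2 : ∀ j ∈ profileF τ,
      w j * ((InvI τ j : ℝ) + p * (Pinv τ j : ℝ)) = w j * (InvI τ j : ℝ) := by
    intro j hj
    simp only [profileF, mem_filter, mem_univ, true_and] at hj
    rw [pinv_ranked τ hj.2]; ring
  rw [Finset.sum_congr rfl h1, Finset.sum_congr rfl h2]
  unfold Qinv
  ring

end LemA

section LemB
open Finset
variable {n k : ℕ}

def Cond {n k : ℕ} (V : Finset (Fin n)) (L : List (Fin n)) (τ : Fin k ↪ Fin n) : Prop :=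
  (∀ i, τ i ∈ V) ∧ ∀ x ∈ L, ranked τ x

instance {n k : ℕ} (V : Finset (Fin n)) (L : List (Fin n)) (τ : Fin k ↪ Fin n) :
    Decidable (Cond V L τ) := by unfold Cond; infer_instance

lemma invI_pos (τ : Fin k ↪ Fin n) {x : Fin n} {b : Fin k} (hb : τ b = x) :
    InvI τ x = (univ.filter fun a : Fin k => a < b ∧ x < τ a).card := by
  unfold InvI
  refine Finset.card_bij' (fun t ht => ((Finset.mem_filter.1 ht).2.2.2 b hb).choose)
    (fun a _ => τ a) ?_ ?_ ?_ ?_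
  · intro t ht
    obtain ⟨hlt, hspec⟩ := ((Finset.mem_filter.1 ht).2.2.2 b hb).choose_spec
    simp only [mem_filter, mem_univ, true_and]
    exact ⟨hlt, by rw [hspec]; exact (Finset.mem_filter.1 ht).2.1⟩
  · intro a ha
    simp only [mem_filter, mem_univ, true_and] at ha ⊢
    refine ⟨ha.2, ⟨a, rfl⟩, fun c hc => ?_⟩
    have : c = b := τ.injective (hc.trans hb.symm)
    exact ⟨a, this ▸ ha.1, rfl⟩
  · intro t ht
    exact ((Finset.mem_filter.1 ht).2.2.2 b hb).choose_spec.2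
  · intro a ha
    generalize_proofs h1
    exact τ.injective h1.choose_spec.2

lemma card_cond_nil (V : Finset (Fin n)) :
    (univ.filter fun τ : Fin k ↪ Fin n => ∀ i, τ i ∈ V).card
      = V.card.descFactorial k := by
  have e : (Fin k ↪ ↥V) ≃ {τ : Fin k ↪ Fin n // ∀ i, τ i ∈ V} :=
    { toFun := fun f => ⟨f.trans (Function.Embedding.subtype _), fun i => (f i).2⟩
      invFun := fun g => ⟨fun i => ⟨g.1 i, g.2 i⟩, fun i j h =>
        g.1.injective (congrArg Subtype.val h)⟩
      left_inv := fun f => by ext i; rfl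
      right_inv := fun g => by ext i; rfl }
  rw [← Fintype.card_subtype, ← Fintype.card_congr e, Fintype.card_embedding_eq,
    Fintype.card_coe, Fintype.card_fin]
end LemB

section Step
open Finset
variable {n k' : ℕ}

def insE (s : Fin n) (b : Fin (k' + 1)) (τ' : Fin k' ↪ Fin n)
    (hs : ∀ z, τ' z ≠ s) : Fin (k' + 1) ↪ Fin n :=
  ⟨b.insertNth s ⇑τ', by
    intro i j h
    rcases eq_or_ne i b with hi | hi
    · rcases eq_or_ne j b with hj | hj
      · rw [hi, hj]
      · obtain ⟨z, rfl⟩ := Fin.exists_succAbove_eq hj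
        rw [hi, Fin.insertNth_apply_same, Fin.insertNth_apply_succAbove] at h
        exact absurd h.symm (hs z)
    · obtain ⟨z, rfl⟩ := Fin.exists_succAbove_eq hi
      rcases eq_or_ne j b with hj | hj
      · rw [hj, Fin.insertNth_apply_same, Fin.insertNth_apply_succAbove] at h
        exact absurd h (hs z)
      · obtain ⟨z', rfl⟩ := Fin.exists_succAbove_eq hj
        rw [Fin.insertNth_apply_succAbove, Fin.insertNth_apply_succAbove] at h
        exact congrArg _ (τ'.injective h)⟩

@[simp] lemma insE_same (s : Fin n) (b : Fin (k' + 1)) (τ' : Fin k' ↪ Fin n) (hs) :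
    insE s b τ' hs b = s := by
  show Fin.insertNth (α := fun _ => Fin n) b s (⇑τ') b = s
  simp

@[simp] lemma insE_succAbove (s : Fin n) (b : Fin (k' + 1)) (τ' : Fin k' ↪ Fin n) (hs)
    (z : Fin k') : insE s b τ' hs (b.succAbove z) = τ' z := by
  show Fin.insertNth (α := fun _ => Fin n) b s (⇑τ') (b.succAbove z) = τ' z
  simp

lemma invI_insE_head (s : Fin n) (b : Fin (k' + 1)) (τ' : Fin k' ↪ Fin n) (hs)
    (hlt : ∀ z, s < τ' z) : InvI (insE s b τ' hs) s = b := by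
  rw [invI_pos (insE s b τ' hs) (insE_same s b τ' hs)]
  have : (univ.filter fun a : Fin (k' + 1) => a < b ∧ s < insE s b τ' hs a)
      = Finset.Iio b := by
    ext a
    simp only [mem_filter, mem_univ, true_and, Finset.mem_Iio, and_iff_left_iff_imp]
    intro hab
    obtain ⟨z, rfl⟩ := Fin.exists_succAbove_eq (Fin.ne_of_lt hab)
    rw [insE_succAbove]
    exact hlt z
  rw [this, Fin.card_Iio]

lemma invI_insE_tail (s : Fin n) (b : Fin (k' + 1)) (τ' : Fin k' ↪ Fin n) (hs)
    {x : Fin n} (hsx : s < x) {c : Fin k'} (hc : τ' c = x) :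
    InvI (insE s b τ' hs) x = InvI τ' x := by
  have hx' : insE s b τ' hs (b.succAbove c) = x := by rw [insE_succAbove, hc]
  rw [invI_pos (insE s b τ' hs) hx', invI_pos τ' hc]
  have hset : (univ.filter fun a : Fin (k' + 1) =>
        a < b.succAbove c ∧ x < insE s b τ' hs a)
      = (univ.filter fun z : Fin k' => z < c ∧ x < τ' z).map b.succAboveEmb := by
    ext a
    simp only [mem_map, mem_filter, mem_univ, true_and, Fin.coe_succAboveEmb]
    constructor
    · rintro ⟨hlt, hx⟩
      have hab : a ≠ b := by
        rintro rfl
        rw [insE_same] at hx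
        exact lt_asymm hsx hx
      obtain ⟨z, rfl⟩ := Fin.exists_succAbove_eq hab
      refine ⟨z, ⟨Fin.succAbove_lt_succAbove_iff.1 hlt, ?_⟩, rfl⟩
      rwa [insE_succAbove] at hx
    · rintro ⟨z, ⟨hzc, hxz⟩, rfl⟩
      exact ⟨Fin.succAbove_lt_succAbove_iff.2 hzc, by rwa [insE_succAbove]⟩
  rw [hset, Finset.card_map]
end Step

section StepSum
open Finset
variable {n k' : ℕ}

noncomputable def posOf (τ : Fin (k' + 1) ↪ Fin n) (s : Fin n) : Fin (k' + 1) :=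
  if h : ∃ b, τ b = s then h.choose else 0

lemma posOf_spec {τ : Fin (k' + 1) ↪ Fin n} {s : Fin n} (h : ∃ b, τ b = s) :
    τ (posOf τ s) = s := by
  rw [posOf, dif_pos h]
  exact h.choose_spec

lemma posOf_eq {τ : Fin (k' + 1) ↪ Fin n} {s : Fin n} {b : Fin (k' + 1)} (hb : τ b = s) :
    posOf τ s = b :=
  τ.injective ((posOf_spec ⟨b, hb⟩).trans hb.symm)

lemma step_sum (β : ℝ) (w : Fin n → ℝ) (V : Finset (Fin n)) (s : Fin n)
    (L : List (Fin n)) (hsV : s ∈ V) (hsmin : ∀ v ∈ V, s ≤ v) (hsL : ∀ x ∈ L, s < x) :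
    ∑ τ ∈ univ.filter fun τ : Fin (k' + 1) ↪ Fin n => Cond V (s :: L) τ,
        ((s :: L).map fun x => Real.exp (-β * w x * (InvI τ x : ℝ))).prod
      = (∑ r ∈ Finset.range (k' + 1), Real.exp (-β * w s * r)) *
        ∑ τ' ∈ univ.filter fun τ' : Fin k' ↪ Fin n => Cond (V.erase s) L τ',
          (L.map fun x => Real.exp (-β * w x * (InvI τ' x : ℝ))).prod := by
  have key : ∑ p ∈ (univ : Finset (Fin (k' + 1))) ×ˢ
        (univ.filter fun τ' : Fin k' ↪ Fin n => Cond (V.erase s) L τ'),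
        Real.exp (-β * w s * ((p.1 : ℕ) : ℝ)) *
          (L.map fun x => Real.exp (-β * w x * (InvI p.2 x : ℝ))).prod
      = ∑ τ ∈ univ.filter fun τ : Fin (k' + 1) ↪ Fin n => Cond V (s :: L) τ,
        ((s :: L).map fun x => Real.exp (-β * w x * (InvI τ x : ℝ))).prod := by
    have hne : ∀ (p : Fin (k' + 1) × (Fin k' ↪ Fin n)),
        p ∈ (univ : Finset (Fin (k' + 1))) ×ˢ
          (univ.filter fun τ' : Fin k' ↪ Fin n => Cond (V.erase s) L τ') →
        ∀ z, p.2 z ≠ s := fun p hp z =>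
      Finset.ne_of_mem_erase (((Finset.mem_filter.1 (Finset.mem_product.1 hp).2).2).1 z)
    refine Finset.sum_bij' (fun p hp => insE s p.1 p.2 (hne p hp))
      (fun τ _ => (posOf τ s, (posOf τ s).succAboveEmb.trans τ))
      ?_ ?_ ?_ ?_ ?_
    · -- maps into filter (Cond V (s::L))
      intro p hp
      obtain ⟨hV, hL⟩ := (Finset.mem_filter.1 (Finset.mem_product.1 hp).2).2
      simp only [mem_filter, mem_univ, true_and]
      constructor
      · intro i
        rcases eq_or_ne i p.1 with h | h
        · rw [h, insE_same]; exact hsV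
        · obtain ⟨z, rfl⟩ := Fin.exists_succAbove_eq h
          rw [insE_succAbove]
          exact Finset.mem_of_mem_erase (hV z)
      · intro x hx
        rcases List.mem_cons.1 hx with rfl | hx'
        · exact ⟨p.1, insE_same _ _ _ _⟩
        · obtain ⟨c, hc⟩ := hL x hx'
          exact ⟨p.1.succAbove c, by rw [insE_succAbove, hc]⟩
    · -- reverse maps into product
      intro τ hτ
      obtain ⟨hV, hL⟩ := (Finset.mem_filter.1 hτ).2
      have hb : τ (posOf τ s) = s := posOf_spec (hL s (List.mem_cons_self))
      rw [Finset.mem_product]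
      refine ⟨Finset.mem_univ _, Finset.mem_filter.2 ⟨Finset.mem_univ _, ?_, ?_⟩⟩
      · intro z
        simp only [Function.Embedding.trans_apply, Fin.succAboveEmb_apply]
        refine Finset.mem_erase.2 ⟨fun hcon => ?_, hV _⟩
        exact Fin.succAbove_ne (posOf τ s) z (τ.injective (hcon.trans hb.symm))
      · intro x hx
        obtain ⟨a, ha⟩ := hL x (List.mem_cons_of_mem s hx)
        have hab : a ≠ posOf τ s := by
          rintro rfl
          rw [ha] at hb
          exact absurd hb.symm (ne_of_lt (hsL x hx))
        obtain ⟨z, rfl⟩ := Fin.exists_succAbove_eq hab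
        exact ⟨z, by simp [ha]⟩
    · -- left inverse
      intro p hp
      have hb1 : posOf (insE s p.1 p.2 (hne p hp)) s = p.1 :=
        posOf_eq (insE_same s p.1 p.2 _)
      refine Prod.ext hb1 ?_
      ext z
      simp only [Function.Embedding.trans_apply, Fin.succAboveEmb_apply, hb1]
      exact congrArg Fin.val (insE_succAbove s p.1 p.2 _ z)
    · -- right inverse
      intro τ hτ
      have hb : τ (posOf τ s) = s :=
        posOf_spec ((Finset.mem_filter.1 hτ).2.2 s (List.mem_cons_self))
      ext i
      rcases eq_or_ne i (posOf τ s) with h | h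
      · rw [h]
        simp only [insE_same]
        exact congrArg Fin.val hb.symm
      · obtain ⟨z, rfl⟩ := Fin.exists_succAbove_eq h
        simp only [insE_succAbove, Function.Embedding.trans_apply, Fin.succAboveEmb_apply]
    · -- weights
      intro p hp
      obtain ⟨hV, hL⟩ := (Finset.mem_filter.1 (Finset.mem_product.1 hp).2).2
      have hlt : ∀ z, s < p.2 z := fun z =>
        lt_of_le_of_ne (hsmin _ (Finset.mem_of_mem_erase (hV z))) (Ne.symm (hne p hp z))
      rw [List.map_cons, List.prod_cons, invI_insE_head s p.1 p.2 (hne p hp) hlt]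
      congr 1
      refine congrArg List.prod (List.map_congr_left fun x hx => ?_)
      obtain ⟨c, hc⟩ := hL x hx
      rw [invI_insE_tail s p.1 p.2 (hne p hp) (hsL x hx) hc]
  rw [← key, Finset.sum_product, ← Fin.sum_univ_eq_sum_range (fun r => Real.exp (-β * w s * r))
    (k' + 1), Finset.sum_mul]
  refine Finset.sum_congr rfl fun b _ => ?_
  rw [Finset.mul_sum]

end StepSum

section Count
open Finset

lemma count_main {n : ℕ} (β : ℝ) (w : Fin n → ℝ) :
    ∀ (L : List (Fin n)), L.Pairwise (· < ·) → ∀ (k : ℕ) (V : Finset (Fin n)),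
      (∀ x ∈ L, x ∈ V) → (∀ v ∈ V, v ∉ L → ∀ x ∈ L, x < v) →
      ∑ τ ∈ univ.filter fun τ : Fin k ↪ Fin n => Cond V L τ,
          (L.map fun x => Real.exp (-β * w x * (InvI τ x : ℝ))).prod
        = ((V.card - L.length).descFactorial (k - L.length) : ℝ)
          * ∏ j : Fin L.length, ∑ r ∈ Finset.range (k - (j : ℕ)),
              Real.exp (-β * w (L.get j) * (r : ℝ))
  | [] => by
    intro _ k V _ _
    have hfil : (univ.filter fun τ : Fin k ↪ Fin n => Cond V [] τ)
        = univ.filter fun τ : Fin k ↪ Fin n => ∀ i, τ i ∈ V := by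
      apply Finset.filter_congr
      intro τ _
      simp [Cond]
    simp only [List.map_nil, List.prod_nil, List.length_nil, Nat.sub_zero]
    rw [Finset.sum_const, hfil, card_cond_nil, nsmul_eq_mul, mul_one]
    simp
  | s :: L => fun hsort k V hmem hgt => by
    have hsL : ∀ x ∈ L, s < x := fun x hx => (List.pairwise_cons.1 hsort).1 x hx
    match k with
    | 0 =>
      have h1 : (univ.filter fun τ : Fin 0 ↪ Fin n => Cond V (s :: L) τ) = ∅ := by
        rw [Finset.filter_eq_empty_iff]
        intro τ _
        rintro ⟨-, hr⟩
        obtain ⟨a, -⟩ := hr s (List.mem_cons_self)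
        exact a.elim0
      rw [h1, Finset.sum_empty]
      have h2 : ∏ j : Fin (s :: L).length, ∑ r ∈ Finset.range (0 - (j : ℕ)),
          Real.exp (-β * w ((s :: L).get j) * (r : ℝ)) = 0 := by
        apply Finset.prod_eq_zero (Finset.mem_univ (0 : Fin (L.length + 1)))
        simp
      rw [h2, mul_zero]
    | k' + 1 =>
      have hsV : s ∈ V := hmem s (List.mem_cons_self)
      have hsmin : ∀ v ∈ V, s ≤ v := by
        intro v hv
        by_cases hvL : v ∈ s :: L
        · rcases List.mem_cons.1 hvL with rfl | h
          · exact le_refl _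
          · exact (hsL v h).le
        · exact (hgt v hv hvL s (List.mem_cons_self)).le
      have hmem' : ∀ x ∈ L, x ∈ V.erase s := fun x hx =>
        Finset.mem_erase.2 ⟨(hsL x hx).ne', hmem x (List.mem_cons_of_mem s hx)⟩
      have hgt' : ∀ v ∈ V.erase s, v ∉ L → ∀ x ∈ L, x < v := by
        intro v hv hvL x hx
        refine hgt v (Finset.mem_of_mem_erase hv) ?_ x (List.mem_cons_of_mem s hx)
        simp only [List.mem_cons, not_or]
        exact ⟨Finset.ne_of_mem_erase hv, hvL⟩
      rw [step_sum β w V s L hsV hsmin hsL,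
        count_main β w L (List.pairwise_cons.1 hsort).2 k' (V.erase s) hmem' hgt']
      have hc1 : (V.erase s).card - L.length = V.card - (s :: L).length := by
        rw [Finset.card_erase_of_mem hsV, List.length_cons]
        omega
      have hc2 : k' - L.length = k' + 1 - (s :: L).length := by
        rw [List.length_cons]
        omega
      rw [hc1, hc2]
      have h3 : ∏ j : Fin (s :: L).length, ∑ r ∈ Finset.range (k' + 1 - (j : ℕ)),
            Real.exp (-β * w ((s :: L).get j) * (r : ℝ))
          = (∑ r ∈ Finset.range (k' + 1), Real.exp (-β * w s * (r : ℝ)))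
            * ∏ j : Fin L.length, ∑ r ∈ Finset.range (k' - (j : ℕ)),
                Real.exp (-β * w (L.get j) * (r : ℝ)) := by
        rw [show ∏ j : Fin (s :: L).length, ∑ r ∈ Finset.range (k' + 1 - (j : ℕ)),
            Real.exp (-β * w ((s :: L).get j) * (r : ℝ))
          = ∏ j : Fin (L.length + 1), ∑ r ∈ Finset.range (k' + 1 - (j : ℕ)),
            Real.exp (-β * w ((s :: L).get j) * (r : ℝ)) from rfl, Fin.prod_univ_succ]
        refine congrArg₂ (· * ·) (by simp) (Finset.prod_congr rfl fun j _ => ?_)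
        have hsub : k' + 1 - ((j.succ : Fin (L.length + 1)) : ℕ) = k' - (j : ℕ) := by
          simp [Nat.succ_sub_succ]
        rw [hsub]
        rfl
      rw [h3]
      ring
end Count

section LemBFinal
open Finset

lemma lemB {n k : ℕ} (hk : k ≤ n) (β : ℝ) (w : Fin n → ℝ) (S : Finset (Fin n))
    (hS : S ⊆ centerF n k) :
    ∑ τ ∈ univ.filter fun τ : Fin k ↪ Fin n => profileF τ = S,
        Real.exp (-β * ∑ j ∈ S, w j * (InvI τ j : ℝ))
      = ZS n k β w S := by
  classical
  set L := S.sort (· ≤ ·) with hLdef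
  have hlen : L.length = S.card := Finset.length_sort _
  have hmemL : ∀ x, x ∈ L ↔ x ∈ S := fun x => Finset.mem_sort _
  have hSk : ∀ x ∈ S, (x : ℕ) < k := by
    intro x hx
    have := hS hx
    simpa [centerF] using this
  set V := S ∪ univ.filter (fun t : Fin n => ¬ ((t : ℕ) < k)) with hVdef
  have hfil : (univ.filter fun τ : Fin k ↪ Fin n => profileF τ = S)
      = univ.filter fun τ : Fin k ↪ Fin n => Cond V L τ := by
    apply Finset.filter_congr
    intro τ _
    constructor
    · intro hp
      constructor
      · intro i
        by_cases h : (τ i : ℕ) < k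
        · refine Finset.mem_union_left _ ?_
          rw [← hp]
          exact Finset.mem_filter.2 ⟨Finset.mem_univ _, h, ⟨i, rfl⟩⟩
        · exact Finset.mem_union_right _ (Finset.mem_filter.2 ⟨Finset.mem_univ _, h⟩)
      · intro x hx
        have : x ∈ profileF τ := hp ▸ (hmemL x).1 hx
        exact (Finset.mem_filter.1 this).2.2
    · rintro ⟨hV, hL⟩
      ext t
      simp only [profileF, Finset.mem_filter, Finset.mem_univ, true_and]
      constructor
      · rintro ⟨htk, a, rfl⟩
        rcases Finset.mem_union.1 (hV a) with h | h
        · exact h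
        · exact absurd htk (Finset.mem_filter.1 h).2
      · intro ht
        exact ⟨hSk t ht, hL t ((hmemL t).2 ht)⟩
  have hwt : ∀ τ : Fin k ↪ Fin n,
      Real.exp (-β * ∑ j ∈ S, w j * (InvI τ j : ℝ))
        = (L.map fun x => Real.exp (-β * w x * (InvI τ x : ℝ))).prod := by
    intro τ
    have h1 : ∑ j ∈ S, w j * (InvI τ j : ℝ)
        = (L.map fun x => w x * (InvI τ x : ℝ)).sum := by
      rw [← List.sum_toFinset _ (Finset.sort_nodup (s := S) (r := (· ≤ ·))), Finset.sort_toFinset]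
    rw [h1, ← List.sum_map_mul_left, Real.exp_list_sum, List.map_map]
    congr 1
    refine List.map_congr_left fun x _ => ?_
    simp [Function.comp, mul_assoc]
  rw [hfil, Finset.sum_congr rfl fun τ _ => hwt τ]
  have hsorted : L.Pairwise (· < ·) := (Finset.sortedLT_sort S).pairwise
  have hmemV : ∀ x ∈ L, x ∈ V := fun x hx =>
    Finset.mem_union_left _ ((hmemL x).1 hx)
  have hgt : ∀ v ∈ V, v ∉ L → ∀ x ∈ L, x < v := by
    intro v hv hvL x hx
    rcases Finset.mem_union.1 hv with h | h
    · exact absurd ((hmemL v).2 h) hvL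
    · have hvk : ¬ (v : ℕ) < k := (Finset.mem_filter.1 h).2
      have hxk : (x : ℕ) < k := hSk x ((hmemL x).1 hx)
      rw [Fin.lt_def]
      omega
  rw [count_main β w L hsorted k V hmemV hgt]
  have hdisj : Disjoint S (univ.filter fun t : Fin n => ¬ ((t : ℕ) < k)) := by
    rw [Finset.disjoint_left]
    intro x hxS hxf
    exact (Finset.mem_filter.1 hxf).2 (hSk x hxS)
  have hVcard : V.card = S.card + (n - k) := by
    rw [hVdef, Finset.card_union_of_disjoint hdisj, card_noncenter hk]
  have h4 : V.card - L.length = n - k := by omega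
  have h5 : k - L.length = k - S.card := by rw [hlen]
  rw [h4, h5]
  unfold ZS
  rw [Nat.descFactorial_eq_factorial_mul_choose]
  have hprod : (∏ j : Fin L.length, ∑ r ∈ Finset.range (k - (j : ℕ)),
        Real.exp (-β * w (L.get j) * (r : ℝ)))
      = ∏ j : Fin S.card, ∑ r ∈ Finset.range (k - (j : ℕ)),
        Real.exp (-β * w ((S.orderIsoOfFin rfl j : S) : Fin n) * (r : ℝ)) := by
    refine Fintype.prod_equiv (finCongr hlen) _ _ fun j => ?_
    have hv : ((S.orderIsoOfFin rfl (finCongr hlen j) : S) : Fin n) = L.get j := by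
      rw [Finset.coe_orderIsoOfFin_apply, Finset.orderEmbOfFin_apply]
      simp [hLdef]
    rw [hv]
    rfl
  rw [hprod]
  push_cast
  ring
end LemBFinal


section FinalAux
open Finset

lemma denom_eq {n k : ℕ} (hk : k ≤ n) (β p w0 : ℝ) (w : Fin n → ℝ) :
    ∑ τ' : Fin k ↪ Fin n, Real.exp (-β * Kdist p w0 w τ')
      = ∑ S' ∈ (centerF n k).powerset,
          Real.exp (-β * fS n k p w0 w S') * ZS n k β w S' := by
  classical
  have h1 : ∀ τ' : Fin k ↪ Fin n, Real.exp (-β * Kdist p w0 w τ')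
      = Real.exp (-β * fS n k p w0 w (profileF τ')) *
        Real.exp (-β * ∑ j ∈ profileF τ', w j * (InvI τ' j : ℝ)) := by
    intro τ'
    rw [← Real.exp_add, kdist_eq p w0 w τ' hk]
    ring_nf
  rw [Finset.sum_congr rfl fun τ' _ => h1 τ']
  rw [← Finset.sum_fiberwise_of_maps_to
    (g := fun τ' : Fin k ↪ Fin n => profileF τ')
    (fun τ' _ => Finset.mem_powerset.2 (profile_subset τ'))]
  refine Finset.sum_congr rfl fun S' hS' => ?_
  have hin : ∀ τ' ∈ univ.filter fun τ' : Fin k ↪ Fin n => profileF τ' = S',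
      Real.exp (-β * fS n k p w0 w (profileF τ')) *
          Real.exp (-β * ∑ j ∈ profileF τ', w j * (InvI τ' j : ℝ))
        = Real.exp (-β * fS n k p w0 w S') *
          Real.exp (-β * ∑ j ∈ S', w j * (InvI τ' j : ℝ)) := by
    intro τ' hτ'
    rw [(Finset.mem_filter.1 hτ').2]
  rw [Finset.sum_congr rfl hin, ← Finset.mul_sum,
    lemB hk β w S' (Finset.mem_powerset.1 hS')]

lemma ZS_pos {n k : ℕ} (hk : k ≤ n) (β : ℝ) (w : Fin n → ℝ) (τ : Fin k ↪ Fin n) :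
    0 < ZS n k β w (profileF τ) := by
  have hsub : k - (profileF τ).card ≤ n - k := by
    have h1 := card_big_ranked τ
    have h2 : (univ.filter fun t : Fin n => ranked τ t ∧ ¬ ((t : ℕ) < k)).card
        ≤ (univ.filter fun t : Fin n => ¬ ((t : ℕ) < k)).card := by
      apply Finset.card_le_card
      intro t ht
      simp only [Finset.mem_filter] at ht ⊢
      exact ⟨ht.1, ht.2.2⟩
    rw [card_noncenter hk] at h2
    omega
  have hlk : (profileF τ).card ≤ k := by
    have := Finset.card_le_card (profile_subset τ)
    rwa [centerF_card hk] at this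
  unfold ZS
  apply mul_pos
  · have : 0 < (n - k).choose (k - (profileF τ).card) * (k - (profileF τ).card).factorial :=
      Nat.mul_pos (Nat.choose_pos hsub) (Nat.factorial_pos _)
    exact_mod_cast this
  · apply Finset.prod_pos
    intro j _
    apply Finset.sum_pos (fun r _ => Real.exp_pos _)
    rw [Finset.nonempty_range_iff]
    have := j.2
    omega

end FinalAux

/-- Correctness of PRIM: sampling a profile `S` with probability proportional to
`exp(-β f(S)) Z(S)` and then a list `τ ∈ T(S)` with probability
`exp(-β Σ_{j∈S} w_j I_j(τ)) / Z(S)` produces `τ` with its generalized top-`k`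
Mallows probability `exp(-β K^{p,w}(τ,τ*)) / M`. -/
theorem stmt7 (n k : ℕ) (hk : k ≤ n) (β p w0 : ℝ) (hβ : 0 ≤ β) (hp : 0 < p)
    (hw0 : 0 ≤ w0) (w : Fin n → ℝ) (hw : ∀ i, 0 ≤ w i)
    (τ : Fin k ↪ Fin n) (S : Finset (Fin n)) (hS : profileF τ = S) :
    (Real.exp (-β * fS n k p w0 w S) * ZS n k β w S /
        ∑ S' ∈ (centerF n k).powerset, Real.exp (-β * fS n k p w0 w S') * ZS n k β w S') *
      (Real.exp (-β * ∑ j ∈ S, w j * (InvI τ j : ℝ)) / ZS n k β w S)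
      = Real.exp (-β * Kdist p w0 w τ) /
          ∑ τ' : Fin k ↪ Fin n, Real.exp (-β * Kdist p w0 w τ') := by
  
  subst hS
  have hZ : 0 < ZS n k β w (profileF τ) := ZS_pos hk β w τ
  have hD : 0 < ∑ τ' : Fin k ↪ Fin n, Real.exp (-β * Kdist p w0 w τ') :=
    Finset.sum_pos (fun _ _ => Real.exp_pos _) ⟨τ, Finset.mem_univ τ⟩
  rw [← denom_eq hk β p w0 w]
  have hK : Real.exp (-β * Kdist p w0 w τ)
      = Real.exp (-β * fS n k p w0 w (profileF τ)) *
        Real.exp (-β * ∑ j ∈ profileF τ, w j * (InvI τ j : ℝ)) := by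
    rw [← Real.exp_add, kdist_eq p w0 w τ hk]
    ring_nf
  rw [hK, div_mul_div_comm]
  rw [show Real.exp (-β * fS n k p w0 w (profileF τ)) * ZS n k β w (profileF τ) *
        Real.exp (-β * ∑ j ∈ profileF τ, w j * (InvI τ j : ℝ))
      = Real.exp (-β * fS n k p w0 w (profileF τ)) *
          Real.exp (-β * ∑ j ∈ profileF τ, w j * (InvI τ j : ℝ)) * ZS n k β w (profileF τ)
    from by ring]
  exact mul_div_mul_right _ _ hZ.ne'
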